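/- Let n ≥ 2, let A be a real n×n singular irreducible M-matrix, and fix an index j0 with 1 ≤ j0 ≤ n−1. For every pattern S_L ⊆ {(i,j) : 1 ≤ j ≤ i ≤ n} that contains all diagonal pairs (i,i) and does not contain (n,j0), there exists a unique lower triangular matrix L_G with (L_G)_{ij} = 0 for (i,j) ∉ S_L and (L_G A)_{ij} = δ_{ij} for all (i,j) ∈ S_L; and for every pattern S_U ⊆ {(i,j) : 1 ≤ i ≤ j ≤ n} that contains all diagonal pairs (i,i) and does not contain (j0,n), there exists a unique upper triangular matrix U_G with (U_G)_{ij} = 0 for (i,j) ∉ S_U and (A U_G)_{ij} = δ_{ij} for all (i,j) ∈ S_U. -/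

import Mathlib

open Matrix

/-- The spectral radius of a real matrix: the maximum modulus of its complex
eigenvalues (supremum of moduli of elements of the complex spectrum). -/
noncomputable def specRad {n : ℕ} (B : Matrix (Fin n) (Fin n) ℝ) : ℝ :=
  sSup ((fun z : ℂ => ‖z‖) '' spectrum ℂ (B.map Complex.ofReal))

/-- A real square matrix is a Z-matrix if its off-diagonal entries are nonpositive. -/
def IsZMatrix {n : ℕ} (A : Matrix (Fin n) (Fin n) ℝ) : Prop :=
  ∀ i j, i ≠ j → A i j ≤ 0

/-- A Z-matrix `A` is a nonsingular M-matrix if `A = s • 1 - B` with `B`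
entrywise nonnegative and `s > ρ(B)`. -/
def IsNonsingularMMatrix {n : ℕ} (A : Matrix (Fin n) (Fin n) ℝ) : Prop :=
  IsZMatrix A ∧ ∃ (s : ℝ) (B : Matrix (Fin n) (Fin n) ℝ),
    (∀ i j, 0 ≤ B i j) ∧ specRad B < s ∧ A = s • (1 : Matrix (Fin n) (Fin n) ℝ) - B

/-- A Z-matrix `A` is a singular M-matrix if `A = ρ(B) • 1 - B` with `B`
entrywise nonnegative. -/
def IsSingularMMatrix {n : ℕ} (A : Matrix (Fin n) (Fin n) ℝ) : Prop :=
  IsZMatrix A ∧ ∃ B : Matrix (Fin n) (Fin n) ℝ,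
    (∀ i j, 0 ≤ B i j) ∧ A = specRad B • (1 : Matrix (Fin n) (Fin n) ℝ) - B

/-- A matrix is irreducible if its directed graph (edge `i → j` iff `A i j ≠ 0`)
is strongly connected. -/
def IsIrreducibleMatrix {n : ℕ} (A : Matrix (Fin n) (Fin n) ℝ) : Prop :=
  ∀ i j : Fin n, Relation.ReflTransGen (fun a b : Fin n => A a b ≠ 0) i j

/-- Lower triangular real matrix. -/
def IsLowerTri {n : ℕ} (L : Matrix (Fin n) (Fin n) ℝ) : Prop :=
  ∀ i j : Fin n, i < j → L i j = 0

/-- Upper triangular real matrix. -/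
def IsUpperTri {n : ℕ} (U : Matrix (Fin n) (Fin n) ℝ) : Prop :=
  ∀ i j : Fin n, j < i → U i j = 0

/-- `L` is an FSAI lower triangular factor of `A` for the pattern `S`:
`L` is lower triangular, vanishes off the pattern, and `(L * A) i j = δ i j`
on the pattern. -/
def IsFSAILowerFactor {n : ℕ} (A L : Matrix (Fin n) (Fin n) ℝ)
    (S : Set (Fin n × Fin n)) : Prop :=
  IsLowerTri L ∧ (∀ p : Fin n × Fin n, p ∉ S → L p.1 p.2 = 0) ∧
    ∀ p : Fin n × Fin n, p ∈ S → (L * A) p.1 p.2 = if p.1 = p.2 then 1 else 0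

/-- `U` is an FSAI upper triangular factor of `A` for the pattern `S`:
`U` is upper triangular, vanishes off the pattern, and `(A * U) i j = δ i j`
on the pattern. -/
def IsFSAIUpperFactor {n : ℕ} (A U : Matrix (Fin n) (Fin n) ℝ)
    (S : Set (Fin n × Fin n)) : Prop :=
  IsUpperTri U ∧ (∀ p : Fin n × Fin n, p ∉ S → U p.1 p.2 = 0) ∧
    ∀ p : Fin n × Fin n, p ∈ S → (A * U) p.1 p.2 = if p.1 = p.2 then 1 else 0

attribute [local instance] Matrix.linftyOpNormedRing Matrix.linftyOpNormedAlgebra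

lemma specRad_attained {n : ℕ} (hn : 0 < n) (B : Matrix (Fin n) (Fin n) ℝ) :
    ∃ z ∈ spectrum ℂ (B.map Complex.ofReal),
      (∀ y ∈ spectrum ℂ (B.map Complex.ofReal), ‖y‖ ≤ ‖z‖) ∧
      specRad B = ‖z‖ := by
  haveI : NeZero n := ⟨hn.ne'⟩
  have hne : (spectrum ℂ (B.map Complex.ofReal)).Nonempty := spectrum.nonempty _
  have hcp : IsCompact (spectrum ℂ (B.map Complex.ofReal)) := spectrum.isCompact _
  obtain ⟨z, hz, hmax⟩ := hcp.exists_isMaxOn hne (continuous_norm.continuousOn)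
  refine ⟨z, hz, fun y hy => hmax hy, ?_⟩
  apply IsGreatest.csSup_eq
  exact ⟨⟨z, hz, rfl⟩, fun y ⟨w, hw, hwy⟩ => hwy ▸ hmax hw⟩

lemma specRad_nonneg {n : ℕ} (hn : 0 < n) (B : Matrix (Fin n) (Fin n) ℝ) :
    0 ≤ specRad B := by
  obtain ⟨z, _, _, h⟩ := specRad_attained hn B
  rw [h]; exact norm_nonneg z

lemma entrywise_nonneg_mul {n : ℕ} {B C : Matrix (Fin n) (Fin n) ℝ}
    (hB : ∀ i j, 0 ≤ B i j) (hC : ∀ i j, 0 ≤ C i j) : ∀ i j, 0 ≤ (B * C) i j := by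
  intro i j
  rw [Matrix.mul_apply]
  exact Finset.sum_nonneg fun k _ => mul_nonneg (hB i k) (hC k j)

lemma entrywise_nonneg_pow {n : ℕ} {B : Matrix (Fin n) (Fin n) ℝ}
    (hB : ∀ i j, 0 ≤ B i j) : ∀ k : ℕ, ∀ i j, 0 ≤ (B ^ k) i j := by
  intro k
  induction k with
  | zero => intro i j; simp [Matrix.one_apply]; split <;> norm_num
  | succ m ih => rw [pow_succ]; exact entrywise_nonneg_mul ih hB

lemma mulVec_mono {n : ℕ} {B : Matrix (Fin n) (Fin n) ℝ} (hB : ∀ i j, 0 ≤ B i j)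
    {x y : Fin n → ℝ} (h : ∀ i, x i ≤ y i) : ∀ i, (B *ᵥ x) i ≤ (B *ᵥ y) i := by
  intro i
  simp only [Matrix.mulVec, dotProduct]
  exact Finset.sum_le_sum fun j _ => mul_le_mul_of_nonneg_left (h j) (hB i j)

lemma mulVec_nonneg {n : ℕ} {B : Matrix (Fin n) (Fin n) ℝ} (hB : ∀ i j, 0 ≤ B i j)
    {x : Fin n → ℝ} (h : ∀ i, 0 ≤ x i) : ∀ i, 0 ≤ (B *ᵥ x) i := by
  intro i
  simp only [Matrix.mulVec, dotProduct]
  exact Finset.sum_nonneg fun j _ => mul_nonneg (hB i j) (h j)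

lemma le_specRad_of_mulVec {n : ℕ} (hn : 0 < n) (B : Matrix (Fin n) (Fin n) ℝ)
    (hB : ∀ i j, 0 ≤ B i j) (v : Fin n → ℝ) (hv : ∀ i, 0 < v i) (s : ℝ) (hs : 0 ≤ s)
    (h : ∀ i, s * v i ≤ (B *ᵥ v) i) : s ≤ specRad B := by
  rcases eq_or_lt_of_le hs with rfl | hs'
  · exact specRad_nonneg hn B
  -- powers
  have hpow : ∀ k : ℕ, ∀ i, s ^ k * v i ≤ ((B ^ k) *ᵥ v) i := by
    intro k
    induction k with
    | zero => intro i; simp [Matrix.one_mulVec]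
    | succ m ih =>
      intro i
      have h1 : ∀ j, (s ^ m • v) j ≤ ((B ^ m) *ᵥ v) j := fun j => by
        simpa [smul_eq_mul] using ih j
      calc s ^ (m+1) * v i = s ^ m * (s * v i) := by ring
        _ ≤ s ^ m * (B *ᵥ v) i := mul_le_mul_of_nonneg_left (h i) (pow_nonneg hs m)
        _ = (B *ᵥ (s ^ m • v)) i := by rw [Matrix.mulVec_smul]; simp [smul_eq_mul]
        _ ≤ (B *ᵥ ((B ^ m) *ᵥ v)) i := mulVec_mono hB h1 i
        _ = ((B ^ (m+1)) *ᵥ v) i := by rw [Matrix.mulVec_mulVec, ← pow_succ']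
  haveI : NeZero n := ⟨hn.ne'⟩
  set M := B.map (Complex.ofReal) with hM
  have hMk : ∀ k : ℕ, M ^ k = (B ^ k).map Complex.ofReal := by
    intro k
    have : (Complex.ofRealHom.mapMatrix (B ^ k)) = (Complex.ofRealHom.mapMatrix B) ^ k :=
      map_pow _ B k
    exact this.symm
  have hU : (Finset.univ : Finset (Fin n)).Nonempty := Finset.univ_nonempty
  set vmax := Finset.univ.sup' hU v with hvmaxdef
  set vmin := Finset.univ.inf' hU v with hvmindef
  have hvmax : 0 < vmax := lt_of_lt_of_le (hv ⟨0, hn⟩) (Finset.le_sup' v (Finset.mem_univ _))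
  have hvmin : 0 < vmin := by
    rw [hvmindef, Finset.lt_inf'_iff]
    exact fun b _ => hv b
  set c := vmin / vmax with hc
  have hcpos : 0 < c := div_pos hvmin hvmax
  set i0 : Fin n := ⟨0, hn⟩ with hi0
  have hrow : ∀ k : ℕ, c * s ^ k ≤ ∑ j, (B ^ k) i0 j := by
    intro k
    have e1 : s ^ k * vmin ≤ (∑ j, (B ^ k) i0 j) * vmax := by
      calc s ^ k * vmin ≤ s ^ k * v i0 :=
            mul_le_mul_of_nonneg_left (Finset.inf'_le v (Finset.mem_univ _)) (pow_nonneg hs k)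
        _ ≤ ((B ^ k) *ᵥ v) i0 := hpow k i0
        _ = ∑ j, (B ^ k) i0 j * v j := rfl
        _ ≤ ∑ j, (B ^ k) i0 j * vmax :=
            Finset.sum_le_sum fun j _ => mul_le_mul_of_nonneg_left
              (Finset.le_sup' v (Finset.mem_univ _)) (entrywise_nonneg_pow hB k i0 j)
        _ = (∑ j, (B ^ k) i0 j) * vmax := (Finset.sum_mul _ _ _).symm
    rw [hc, div_mul_eq_mul_div, div_le_iff₀ hvmax]
    linarith [e1]
  have hnorm : ∀ k : ℕ, c * s ^ k ≤ ‖M ^ k‖ := by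
    intro k
    refine le_trans (hrow k) ?_
    have h1 : (∑ j, ‖(M ^ k) i0 j‖₊) ≤ ‖M ^ k‖₊ := by
      rw [Matrix.linfty_opNNNorm_def]
      exact Finset.le_sup (f := fun i => ∑ j, ‖(M ^ k) i j‖₊) (Finset.mem_univ i0)
    have h2 : (∑ j, ‖(M ^ k) i0 j‖) ≤ ‖M ^ k‖ := by
      have := h1
      rw [← NNReal.coe_le_coe] at this
      simpa [NNReal.coe_sum] using this
    refine le_trans (le_of_eq ?_) h2
    refine Finset.sum_congr rfl fun j _ => ?_
    rw [hMk k]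
    simp only [Matrix.map_apply]
    rw [Complex.norm_real, Real.norm_eq_abs, abs_of_nonneg (entrywise_nonneg_pow hB k i0 j)]
  have hG := spectrum.pow_norm_pow_one_div_tendsto_nhds_spectralRadius M
  have t1 : Filter.Tendsto (fun k : ℕ => c ^ (1/(k:ℝ))) Filter.atTop (nhds 1) := by
    have := Filter.Tendsto.rpow (tendsto_const_nhds (x := c))
      tendsto_one_div_atTop_nhds_zero_nat (Or.inl hcpos.ne')
    simpa using this
  have t2 : Filter.Tendsto (fun k : ℕ => ENNReal.ofReal (c ^ (1/(k:ℝ)) * s)) Filter.atTop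
      (nhds (ENNReal.ofReal s)) := by
    have t3 : Filter.Tendsto (fun k : ℕ => c ^ (1/(k:ℝ)) * s) Filter.atTop (nhds s) := by
      simpa using t1.mul (tendsto_const_nhds (x := s))
    exact (ENNReal.continuous_ofReal.tendsto s).comp t3
  have hev : ∀ᶠ k : ℕ in Filter.atTop,
      ENNReal.ofReal (c ^ (1/(k:ℝ)) * s) ≤ ENNReal.ofReal (‖M ^ k‖ ^ (1/(k:ℝ))) := by
    refine Filter.eventually_atTop.2 ⟨1, fun k hk => ?_⟩
    apply ENNReal.ofReal_le_ofReal
    have hk0 : (k:ℝ) ≠ 0 := Nat.cast_ne_zero.2 (by omega)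
    have e1 : c ^ (1/(k:ℝ)) * s = (c * s ^ k) ^ (1/(k:ℝ)) := by
      rw [Real.mul_rpow hcpos.le (pow_nonneg hs k)]
      congr 1
      rw [← Real.rpow_natCast s k, ← Real.rpow_mul hs]
      rw [mul_one_div, div_self hk0, Real.rpow_one]
    rw [e1]
    exact Real.rpow_le_rpow (mul_nonneg hcpos.le (pow_nonneg hs k)) (hnorm k)
      (by positivity)
  have key : ENNReal.ofReal s ≤ spectralRadius ℂ M :=
    le_of_tendsto_of_tendsto t2 hG hev
  obtain ⟨z0, hz0, hmax, hspec⟩ := specRad_attained hn B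
  have hub : spectralRadius ℂ M ≤ ENNReal.ofReal (specRad B) := by
    refine iSup₂_le fun z hz => ?_
    rw [← ENNReal.ofReal_coe_nnreal, coe_nnnorm]
    refine ENNReal.ofReal_le_ofReal ?_
    rw [hspec]
    simpa using hmax z hz
  have := le_trans key hub
  exact (ENNReal.ofReal_le_ofReal_iff (by rw [hspec]; exact norm_nonneg z0)).1 this

lemma sum_subtype_of_vanish {n : ℕ} (P : Fin n → Prop) [DecidablePred P] (F : Fin n → ℝ)
    (h : ∀ k, ¬ P k → F k = 0) : ∑ k, F k = ∑ k : {i // P i}, F ↑k := by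
  have h1 : ∑ k ∈ Finset.univ.filter P, F k = ∑ k, F k :=
    Finset.sum_filter_of_ne (fun x _ hx => by_contra fun hP => hx (h x hP))
  have h2 : ∑ k ∈ Finset.univ.filter P, F k = ∑ k : {i // P i}, F ↑k :=
    Finset.sum_subtype _ (by simp) F
  rw [← h1, h2]

section Reach

variable {n : ℕ} {B : Matrix (Fin n) (Fin n) ℝ}

lemma onePlus_nonneg (hB : ∀ i j, 0 ≤ B i j) :
    ∀ i j, 0 ≤ (1 + B) i j := by
  intro i j
  have : (1 + B) i j = (if i = j then 1 else 0) + B i j := by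
    simp [Matrix.add_apply, Matrix.one_apply]
  rw [this]
  have := hB i j
  split <;> linarith

lemma onePlusPow_ge (hB : ∀ i j, 0 ≤ B i j) (t : ℕ) {x : Fin n → ℝ} (hx : ∀ i, 0 ≤ x i) :
    ∀ i, x i ≤ (((1 + B) ^ t) *ᵥ x) i := by
  induction t with
  | zero => intro i; simp [Matrix.one_mulVec]
  | succ m ih =>
    intro i
    have hy : ∀ i, 0 ≤ (((1 + B) ^ m) *ᵥ x) i :=
      mulVec_nonneg (entrywise_nonneg_pow (onePlus_nonneg hB) m) hx
    calc x i ≤ (((1 + B) ^ m) *ᵥ x) i := ih i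
      _ ≤ (((1 + B) ^ m) *ᵥ x) i + (B *ᵥ (((1 + B) ^ m) *ᵥ x)) i := by
          have := mulVec_nonneg hB hy i
          linarith
      _ = (((1 + B) ^ (m + 1)) *ᵥ x) i := by
          rw [pow_succ', Matrix.mulVec_mulVec]
          rw [Matrix.add_mul, Matrix.one_mul, Matrix.add_mulVec]
          simp [Matrix.mulVec_mulVec]
  
lemma onePlusPow_pos_mono (hB : ∀ i j, 0 ≤ B i j) {t T : ℕ} (htT : t ≤ T)
    {x : Fin n → ℝ} (hx : ∀ i, 0 ≤ x i) {k : Fin n}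
    (hk : 0 < (((1 + B) ^ t) *ᵥ x) k) : 0 < (((1 + B) ^ T) *ᵥ x) k := by
  have h1 : (1 + B) ^ T = (1 + B) ^ (T - t) * (1 + B) ^ t := by
    rw [← pow_add]; congr 1; omega
  rw [h1, ← Matrix.mulVec_mulVec]
  have hy : ∀ i, 0 ≤ (((1 + B) ^ t) *ᵥ x) i :=
    mulVec_nonneg (entrywise_nonneg_pow (onePlus_nonneg hB) t) hx
  exact lt_of_lt_of_le hk (onePlusPow_ge hB (T - t) hy k)

lemma reach_pos (hB : ∀ i j, 0 ≤ B i j) {x : Fin n → ℝ} (hx : ∀ i, 0 ≤ x i)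
    {k j : Fin n} (hreach : Relation.ReflTransGen (fun a b => B a b ≠ 0) k j)
    (hj : 0 < x j) : ∃ t, 0 < (((1 + B) ^ t) *ᵥ x) k := by
  induction hreach using Relation.ReflTransGen.head_induction_on with
  | refl => exact ⟨0, by simpa [Matrix.one_mulVec] using hj⟩
  | head hac _ ih =>
    obtain ⟨t, ht⟩ := ih
    rename_i a c _
    refine ⟨t + 1, ?_⟩
    have hy : ∀ i, 0 ≤ (((1 + B) ^ t) *ᵥ x) i :=
      mulVec_nonneg (entrywise_nonneg_pow (onePlus_nonneg hB) t) hx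
    have hBac : 0 < B a c := lt_of_le_of_ne (hB a c) (Ne.symm hac)
    have hterm : 0 < (B *ᵥ (((1 + B) ^ t) *ᵥ x)) a := by
      have hle : B a c * (((1 + B) ^ t) *ᵥ x) c ≤ ∑ m, B a m * (((1 + B) ^ t) *ᵥ x) m :=
        Finset.single_le_sum (f := fun m => B a m * (((1 + B) ^ t) *ᵥ x) m)
          (fun m _ => mul_nonneg (hB a m) (hy m)) (Finset.mem_univ c)
      have : 0 < B a c * (((1 + B) ^ t) *ᵥ x) c := mul_pos hBac ht
      have hrfl : (B *ᵥ (((1 + B) ^ t) *ᵥ x)) a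
          = ∑ m, B a m * (((1 + B) ^ t) *ᵥ x) m := rfl
      rw [hrfl]
      linarith
    have heq : (((1 + B) ^ (t + 1)) *ᵥ x) a
        = (((1 + B) ^ t) *ᵥ x) a + (B *ᵥ (((1 + B) ^ t) *ᵥ x)) a := by
      rw [pow_succ', Matrix.mulVec_mulVec]
      rw [Matrix.add_mul, Matrix.one_mul, Matrix.add_mulVec]
      simp [Matrix.mulVec_mulVec]
    rw [heq]
    have := hy a
    linarith

lemma exists_pow_pos (hB : ∀ i j, 0 ≤ B i j)
    (hconn : ∀ i j : Fin n, Relation.ReflTransGen (fun a b => B a b ≠ 0) i j)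
    {x : Fin n → ℝ} (hx : ∀ i, 0 ≤ x i) {j : Fin n} (hj : 0 < x j) :
    ∃ T, ∀ k, 0 < (((1 + B) ^ T) *ᵥ x) k := by
  have h : ∀ k : Fin n, ∃ t, 0 < (((1 + B) ^ t) *ᵥ x) k :=
    fun k => reach_pos hB hx (hconn k j) hj
  choose tf htf using h
  refine ⟨Finset.univ.sup tf, fun k => ?_⟩
  exact onePlusPow_pos_mono hB (Finset.le_sup (Finset.mem_univ k)) hx (htf k)

lemma crossing {w : Fin n → ℝ} (hw : ∀ i, 0 ≤ w i) {a j : Fin n}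
    (hchain : Relation.ReflTransGen (fun a b => B a b ≠ 0) a j) (hj : 0 < w j) :
    w a = 0 → ∃ p q, B p q ≠ 0 ∧ w p = 0 ∧ 0 < w q := by
  induction hchain using Relation.ReflTransGen.head_induction_on with
  | refl => intro ha; exact absurd hj (by rw [ha]; exact lt_irrefl 0)
  | head hac _ ih =>
    rename_i p c _
    intro hp
    by_cases hc : w c = 0
    · exact ih hc
    · exact ⟨p, c, hac, hp, lt_of_le_of_ne (hw c) (Ne.symm hc)⟩

end Reach

lemma key_det {n : ℕ} (hn : 0 < n) (B : Matrix (Fin n) (Fin n) ℝ)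
    (hB : ∀ i j, 0 ≤ B i j)
    (hconn : ∀ i j : Fin n, Relation.ReflTransGen (fun a b => B a b ≠ 0) i j)
    (P : Fin n → Prop) [DecidablePred P] (hP : ∃ i, ¬ P i) :
    ((specRad B • (1 : Matrix (Fin n) (Fin n) ℝ) - B).submatrix
      (Subtype.val : {i // P i} → Fin n) Subtype.val).det ≠ 0 := by
  intro hdet
  set r := specRad B with hr
  have hr0 : 0 ≤ r := specRad_nonneg hn B
  obtain ⟨x, hx0, hxA⟩ := Matrix.exists_mulVec_eq_zero_iff.2 hdet
  -- the eigen equation on the subtype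
  have heig : ∀ i : {i // P i}, r * x i = ∑ k : {i // P i}, B ↑i ↑k * x k := by
    intro i
    have h0 := congrFun hxA i
    simp only [Matrix.mulVec, dotProduct, Matrix.submatrix_apply, Matrix.sub_apply,
      Matrix.smul_apply, Matrix.one_apply, smul_eq_mul, Pi.zero_apply, sub_mul] at h0
    rw [Finset.sum_sub_distrib] at h0
    have h1 : ∑ k : {i // P i}, (r * if (↑i : Fin n) = ↑k then 1 else 0) * x k = r * x i := by
      rw [Finset.sum_eq_single i]
      · simp
      · intro b _ hb
        have : (↑i : Fin n) ≠ ↑b := fun hc => hb (Subtype.ext hc).symm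
        simp [this]
      · simp
    rw [h1] at h0
    linarith [h0]
  -- the extended vector
  classical
  set w : Fin n → ℝ := fun i => if h : P i then |x ⟨i, h⟩| else 0 with hw
  have hw0 : ∀ i, 0 ≤ w i := by
    intro i; rw [hw]; dsimp only; split
    · exact abs_nonneg _
    · exact le_refl 0
  have hwsub : ∀ k : {i // P i}, w ↑k = |x k| := by
    intro k; rw [hw]; dsimp only
    rw [dif_pos k.2]
  obtain ⟨j, hj⟩ : ∃ j : {i // P i}, x j ≠ 0 := by
    by_contra hcon
    push_neg at hcon
    exact hx0 (funext fun k => hcon k)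
  have hwj : 0 < w ↑j := by rw [hwsub]; exact abs_pos.2 hj
  -- B w ≥ r w
  have hBw : ∀ i, r * w i ≤ (B *ᵥ w) i := by
    intro i
    by_cases hi : P i
    · have e1 : (B *ᵥ w) i = ∑ k : {i // P i}, B i ↑k * |x k| := by
        have : (B *ᵥ w) i = ∑ k, B i k * w k := rfl
        rw [this, sum_subtype_of_vanish P (fun k => B i k * w k)
          (fun k hk => by rw [hw]; dsimp only; rw [dif_neg hk, mul_zero])]
        exact Finset.sum_congr rfl fun k _ => by rw [hwsub]
      have e2 : r * w i = r * |x ⟨i, hi⟩| := by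
        rw [hw]; dsimp only; rw [dif_pos hi]
      rw [e1, e2]
      calc r * |x ⟨i, hi⟩| ≤ |r * x ⟨i, hi⟩| := by
            rw [abs_mul]
            exact mul_le_mul_of_nonneg_right (le_abs_self r) (abs_nonneg _)
        _ = |∑ k : {i // P i}, B i ↑k * x k| := by rw [heig ⟨i, hi⟩]
        _ ≤ ∑ k : {i // P i}, |B i ↑k * x k| := Finset.abs_sum_le_sum_abs _ _
        _ = ∑ k : {i // P i}, B i ↑k * |x k| := Finset.sum_congr rfl fun k _ => by
            rw [abs_mul, abs_of_nonneg (hB i ↑k)]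
    · have : w i = 0 := by rw [hw]; dsimp only; rw [dif_neg hi]
      rw [this, mul_zero]
      exact mulVec_nonneg hB hw0 i
  -- the defect vector
  set d : Fin n → ℝ := fun i => (B *ᵥ w) i - r * w i with hd
  have hd0 : ∀ i, 0 ≤ d i := fun i => by rw [hd]; dsimp only; linarith [hBw i]
  -- crossing point
  obtain ⟨iz, hiz⟩ := hP
  have hwiz : w iz = 0 := by rw [hw]; dsimp only; rw [dif_neg hiz]
  obtain ⟨p, q, hpq, hp0, hq0⟩ := crossing hw0 (hconn iz ↑j) hwj hwiz
  have hdp : 0 < d p := by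
    rw [hd]; dsimp only
    rw [hp0, mul_zero, sub_zero]
    have hle : B p q * w q ≤ ∑ m, B p m * w m :=
      Finset.single_le_sum (f := fun m => B p m * w m)
        (fun m _ => mul_nonneg (hB p m) (hw0 m)) (Finset.mem_univ q)
    have hpos : 0 < B p q * w q := mul_pos (lt_of_le_of_ne (hB p q) (Ne.symm hpq)) hq0
    have : (B *ᵥ w) p = ∑ m, B p m * w m := rfl
    rw [this]
    linarith
  -- amplify
  obtain ⟨T1, hT1⟩ := exists_pow_pos hB hconn hw0 hwj
  obtain ⟨T2, hT2⟩ := exists_pow_pos hB hconn hd0 hdp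
  set T := max T1 T2 with hT
  set C := (1 + B) ^ T with hC
  set v := C *ᵥ w with hv
  set cv := C *ᵥ d with hcv
  have hvpos : ∀ k, 0 < v k := fun k =>
    onePlusPow_pos_mono hB (le_max_left T1 T2) hw0 (hT1 k)
  have hcvpos : ∀ k, 0 < cv k := fun k =>
    onePlusPow_pos_mono hB (le_max_right T1 T2) hd0 (hT2 k)
  -- commute
  have hcomm : B * C = C * B := by
    have h1 : Commute B (1 + B) := ((Commute.one_right B).add_right (Commute.refl B))
    exact (h1.pow_right T).eq
  have hBwd : B *ᵥ w = r • w + d := by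
    funext i
    rw [hd]
    simp only [Pi.add_apply, Pi.smul_apply, smul_eq_mul]
    ring
  have hBv : B *ᵥ v = r • v + cv := by
    rw [hv, Matrix.mulVec_mulVec, hcomm, ← Matrix.mulVec_mulVec, hBwd]
    rw [Matrix.mulVec_add, Matrix.mulVec_smul]
  -- the improvement δ
  haveI : NeZero n := ⟨hn.ne'⟩
  have hU : (Finset.univ : Finset (Fin n)).Nonempty := Finset.univ_nonempty
  set δ := Finset.univ.inf' hU (fun k => cv k / v k) with hδ
  have hδpos : 0 < δ := by
    rw [hδ, Finset.lt_inf'_iff]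
    exact fun k _ => div_pos (hcvpos k) (hvpos k)
  have hkey : ∀ k, (r + δ) * v k ≤ (B *ᵥ v) k := by
    intro k
    have h1 : δ ≤ cv k / v k := Finset.inf'_le _ (Finset.mem_univ k)
    have h2 : δ * v k ≤ cv k := (le_div_iff₀ (hvpos k)).1 h1
    have h3 : (B *ᵥ v) k = r * v k + cv k := by
      rw [hBv]; simp [smul_eq_mul]
    rw [h3]; nlinarith [hvpos k]
  have := le_specRad_of_mulVec hn B hB v hvpos (r + δ) (by linarith) hkey
  rw [← hr] at this
  linarith

lemma sum_subtype_of_vanish' {n : ℕ} (P : Fin n → Prop) [DecidablePred P] (F : Fin n → ℝ)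
    (h : ∀ k, ¬ P k → F k = 0) : ∑ k, F k = ∑ k : {i // P i}, F ↑k := by
  have h1 : ∑ k ∈ Finset.univ.filter P, F k = ∑ k, F k :=
    Finset.sum_filter_of_ne (fun x _ hx => by_contra fun hP => hx (h x hP))
  have h2 : ∑ k ∈ Finset.univ.filter P, F k = ∑ k : {i // P i}, F ↑k :=
    Finset.sum_subtype _ (by simp) F
  rw [← h1, h2]

lemma fsai_lower_core {n : ℕ} (A : Matrix (Fin n) (Fin n) ℝ)
    (hsub : ∀ (P : Fin n → Prop) [DecidablePred P], (∃ i, ¬ P i) →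
      IsUnit ((A.submatrix (Subtype.val : {i // P i} → Fin n) Subtype.val).det))
    (S : Set (Fin n × Fin n)) (hS : S ⊆ {p | p.2 ≤ p.1})
    (hprop : ∀ i, ∃ j, (i, j) ∉ S) :
    ∃! L : Matrix (Fin n) (Fin n) ℝ, IsFSAILowerFactor A L S := by
  classical
  set P : Fin n → Fin n → Prop := fun i j => (i, j) ∈ S with hP
  set M : (i : Fin n) → Matrix {j // P i j} {j // P i j} ℝ :=
    fun i => A.submatrix Subtype.val Subtype.val with hM
  have hMunit : ∀ i, IsUnit (M i).det := by
    intro i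
    obtain ⟨j, hj⟩ := hprop i
    exact hsub (P i) ⟨j, hj⟩
  set b : (i : Fin n) → {j // P i j} → ℝ := fun i j => if i = ↑j then 1 else 0 with hb
  set ℓ : (i : Fin n) → {j // P i j} → ℝ := fun i => b i ᵥ* (M i)⁻¹ with hℓ
  set L : Matrix (Fin n) (Fin n) ℝ :=
    fun i k => if h : P i k then ℓ i ⟨k, h⟩ else 0 with hL
  -- row equation of any candidate with restricted row ρ
  have hrow : ∀ (L' : Matrix (Fin n) (Fin n) ℝ) (i : Fin n),
      (∀ k, ¬ P i k → L' i k = 0) →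
      ∀ j : {j // P i j}, ((fun k : {j // P i j} => L' i ↑k) ᵥ* M i) j = (L' * A) i ↑j := by
    intro L' i hvanish j
    have : ((fun k : {j // P i j} => L' i ↑k) ᵥ* M i) j
        = ∑ k : {j // P i j}, L' i ↑k * A ↑k ↑j := rfl
    rw [this, Matrix.mul_apply]
    exact (sum_subtype_of_vanish' (P i) (fun k => L' i k * A k ↑j)
      (fun k hk => by show L' i k * A k ↑j = 0; rw [hvanish k hk, zero_mul])).symm
  have hLvan : ∀ i k, ¬ P i k → L i k = 0 := by
    intro i k hk; rw [hL]; exact dif_neg hk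
  have hLrow : ∀ (i : Fin n) (j : {j // P i j}), (L * A) i ↑j = b i j := by
    intro i j
    rw [← hrow L i (hLvan i) j]
    have : (fun k : {j // P i j} => L i ↑k) = ℓ i := by
      funext k
      rw [hL]; dsimp only; rw [dif_pos k.2]
    rw [this, hℓ]
    rw [Matrix.vecMul_vecMul, Matrix.nonsing_inv_mul _ (hMunit i), Matrix.vecMul_one]
  refine ⟨L, ⟨?_, ?_, ?_⟩, ?_⟩
  · -- lower triangular
    intro i j hij
    apply hLvan
    intro hmem
    exact absurd (hS hmem) (not_le.2 hij)
  · exact fun p hp => hLvan p.1 p.2 hp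
  · intro p hp
    have := hLrow p.1 ⟨p.2, hp⟩
    rw [this, hb]
  · -- uniqueness
    intro L' hL'
    obtain ⟨hlt', hvan', heq'⟩ := hL'
    funext i k
    by_cases hk : P i k
    · have h1 : (fun k : {j // P i j} => L' i ↑k) ᵥ* M i = b i := by
        funext j
        rw [hrow L' i (fun k hk => hvan' (i, k) hk) j]
        rw [heq' (i, ↑j) j.2, hb]
      have h2 : (fun k : {j // P i j} => L' i ↑k) = ℓ i := by
        have := congrArg (fun y => y ᵥ* (M i)⁻¹) h1
        rw [Matrix.vecMul_vecMul, Matrix.mul_nonsing_inv _ (hMunit i),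
          Matrix.vecMul_one] at this
        rw [this, hℓ]
      have h3 := congrFun h2 ⟨k, hk⟩
      dsimp only at h3
      rw [h3]
      simp only [hL]
      rw [dif_pos hk]
    · rw [hvan' (i, k) hk, hLvan i k hk]

theorem fsai_exists_unique_general_excluded_pair (n : ℕ) (hn : 2 ≤ n)
    (A : Matrix (Fin n) (Fin n) ℝ)
    (hA : IsSingularMMatrix A) (hirr : IsIrreducibleMatrix A)
    (j0 : Fin n) (hj0 : (j0 : ℕ) < n - 1) :
    (∀ S : Set (Fin n × Fin n),
      S ⊆ {p : Fin n × Fin n | p.2 ≤ p.1} → (∀ i : Fin n, (i, i) ∈ S) →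
      ((⟨n - 1, by omega⟩ : Fin n), j0) ∉ S →
      ∃! L : Matrix (Fin n) (Fin n) ℝ, IsFSAILowerFactor A L S) ∧
    (∀ S : Set (Fin n × Fin n),
      S ⊆ {p : Fin n × Fin n | p.1 ≤ p.2} → (∀ i : Fin n, (i, i) ∈ S) →
      (j0, (⟨n - 1, by omega⟩ : Fin n)) ∉ S →
      ∃! U : Matrix (Fin n) (Fin n) ℝ, IsFSAIUpperFactor A U S) := by
  obtain ⟨hZ, B, hBnn, hAeq⟩ := hA
  have hn0 : 0 < n := by omega
  have hAB : ∀ a b : Fin n, a ≠ b → A a b = - B a b := by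
    intro a b hab
    rw [hAeq]
    simp [Matrix.sub_apply, Matrix.smul_apply, Matrix.one_apply, hab]
  have hconn : ∀ i j : Fin n, Relation.ReflTransGen (fun a b : Fin n => B a b ≠ 0) i j := by
    intro i j
    have h := hirr i j
    induction h with
    | refl => exact Relation.ReflTransGen.refl
    | tail hpre hstep ih =>
      rename_i b c
      by_cases hbc : b = c
      · exact hbc ▸ ih
      · refine ih.tail fun h0 => hstep ?_
        rw [hAB b c hbc, h0, neg_zero]
  have hsubA : ∀ (P : Fin n → Prop) [DecidablePred P], (∃ i, ¬ P i) →
      IsUnit ((A.submatrix (Subtype.val : {i // P i} → Fin n) Subtype.val).det) := by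
    intro P _ hP
    rw [hAeq]
    exact isUnit_iff_ne_zero.2 (key_det hn0 B hBnn hconn P hP)
  have hsubAT : ∀ (P : Fin n → Prop) [DecidablePred P], (∃ i, ¬ P i) →
      IsUnit ((Aᵀ.submatrix (Subtype.val : {i // P i} → Fin n) Subtype.val).det) := by
    intro P _ hP
    have e : (Aᵀ.submatrix (Subtype.val : {i // P i} → Fin n) Subtype.val)
        = (A.submatrix (Subtype.val : {i // P i} → Fin n) Subtype.val)ᵀ := by
      rw [Matrix.transpose_submatrix]
    rw [e, Matrix.det_transpose]
    exact hsubA P hP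
  constructor
  · intro S hS hdiag hnot
    apply fsai_lower_core A hsubA S hS
    intro i
    by_cases hi : (i : ℕ) = n - 1
    · have : i = (⟨n - 1, by omega⟩ : Fin n) := Fin.ext hi
      exact ⟨j0, by rwa [this]⟩
    · refine ⟨⟨n - 1, by omega⟩, fun hmem => ?_⟩
      have h1 : ((⟨n - 1, by omega⟩ : Fin n) : ℕ) ≤ (i : ℕ) := hS hmem
      have h2 := i.isLt
      simp only at h1
      omega
  · intro S hS hdiag hnot
    set S' : Set (Fin n × Fin n) := {p | (p.2, p.1) ∈ S} with hS'
    have hmemS' : ∀ p : Fin n × Fin n, p ∈ S' ↔ (p.2, p.1) ∈ S := fun p => Iff.rfl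
    have hS'low : S' ⊆ {p | p.2 ≤ p.1} := fun p hp => hS hp
    have hprop' : ∀ i, ∃ j, (i, j) ∉ S' := by
      intro i
      by_cases hi : (i : ℕ) = n - 1
      · have hieq : i = (⟨n - 1, by omega⟩ : Fin n) := Fin.ext hi
        refine ⟨j0, fun hmem => ?_⟩
        rw [hmemS'] at hmem
        simp only at hmem
        rw [hieq] at hmem
        exact hnot hmem
      · refine ⟨⟨n - 1, by omega⟩, fun hmem => ?_⟩
        rw [hmemS'] at hmem
        have h1 : ((⟨n - 1, by omega⟩ : Fin n) : ℕ) ≤ (i : ℕ) := hS hmem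
        have h2 := i.isLt
        simp only at h1
        omega
    obtain ⟨L, hLf, hLu⟩ := fsai_lower_core Aᵀ hsubAT S' hS'low hprop'
    have prodswap : ∀ (U : Matrix (Fin n) (Fin n) ℝ) (p : Fin n × Fin n),
        (Uᵀ * Aᵀ) p.1 p.2 = (A * U) p.2 p.1 := by
      intro U p
      rw [Matrix.mul_apply, Matrix.mul_apply]
      refine Finset.sum_congr rfl fun k _ => ?_
      rw [Matrix.transpose_apply, Matrix.transpose_apply]
      ring
    have swapmem : ∀ p : Fin n × Fin n, p ∈ S → (p.2, p.1) ∈ S' := by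
      intro p hp
      rw [hmemS']
      simpa using hp
    have swapnotmem : ∀ p : Fin n × Fin n, p ∉ S → (p.2, p.1) ∉ S' := by
      intro p hp hmem
      rw [hmemS'] at hmem
      simp only at hmem
      exact hp (by rwa [Prod.mk.eta] at hmem)
    refine ⟨Lᵀ, ?_, ?_⟩
    · obtain ⟨hlt, hvan, hmul⟩ := hLf
      refine ⟨fun i j hji => hlt j i hji, fun p hp => hvan (p.2, p.1) (swapnotmem p hp),
        fun p hp => ?_⟩
      have e : (A * Lᵀ) p.1 p.2 = (L * Aᵀ) p.2 p.1 := by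
        have := prodswap Lᵀ (p.2, p.1)
        simp only [Matrix.transpose_transpose] at this
        exact this.symm
      rw [e, hmul (p.2, p.1) (swapmem p hp)]
      by_cases hpp : p.1 = p.2
      · simp [hpp]
      · simp only [if_neg hpp, if_neg (fun h => hpp (Eq.symm h))]
    · intro U' hU'
      obtain ⟨hut, hvan, hmul⟩ := hU'
      have hL' : IsFSAILowerFactor Aᵀ U'ᵀ S' := by
        refine ⟨fun i j hij => hut j i hij, fun p hp => ?_, fun p hp => ?_⟩
        · have : (p.2, p.1) ∉ S := fun hc => hp (by rw [hmemS']; simpa using hc)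
          exact hvan (p.2, p.1) this
        · rw [prodswap U' p, hmul (p.2, p.1) (by rw [hmemS'] at hp; simpa using hp)]
          by_cases hpp : p.1 = p.2
          · simp [hpp]
          · simp only [if_neg hpp, if_neg (fun h => hpp (Eq.symm h))]
      have hLeq := hLu U'ᵀ hL'
      calc U' = U'ᵀᵀ := (Matrix.transpose_transpose U').symm
        _ = Lᵀ := by rw [hLeq]
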